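/- Let E be a nonzero real Banach space, S : E ⇉ E* maximally monotone, and φ_S its Fitzpatrick function. Then φ_S is proper convex lower semicontinuous, φ_S ≥ q_L on E × E*, and {b ∈ E × E* : φ_S(b) = q_L(b)} = G(S). -/

import Mathlib

/-- The Fitzpatrick function of the monotone set `G ⊆ E × E*`. -/
noncomputable def fitz {E : Type*} [NormedAddCommGroup E] [NormedSpace ℝ E]
    (G : Set (E × StrongDual ℝ E)) (b : E × StrongDual ℝ E) : EReal :=
  ⨆ p ∈ G, ((b.2 p.1 + p.2 b.1 - p.2 p.1 : ℝ) : EReal)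

theorem stmt15 {E : Type*} [NormedAddCommGroup E] [NormedSpace ℝ E] [CompleteSpace E]
    [Nontrivial E]
    (G : Set (E × StrongDual ℝ E))
    (hmono : ∀ a ∈ G, ∀ b ∈ G, 0 ≤ (a.2 - b.2) (a.1 - b.1))
    (hmax : ∀ c : E × StrongDual ℝ E,
      (∀ a ∈ G, 0 ≤ (a.2 - c.2) (a.1 - c.1)) → c ∈ G) :
    (∀ b, fitz G b ≠ ⊥) ∧ (∃ b, fitz G b ≠ ⊤) ∧
    (∀ b c : E × StrongDual ℝ E, ∀ a a' : ℝ, 0 ≤ a → 0 ≤ a' → a + a' = 1 →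
      fitz G (a • b + a' • c) ≤ (a : EReal) * fitz G b + (a' : EReal) * fitz G c) ∧
    LowerSemicontinuous (fitz G) ∧
    (∀ b : E × StrongDual ℝ E, ((b.2 b.1 : ℝ) : EReal) ≤ fitz G b) ∧
    {b : E × StrongDual ℝ E | fitz G b = ((b.2 b.1 : ℝ) : EReal)} = G := by
  -- G is nonempty
  have hne : G.Nonempty := by
    by_contra h
    rw [Set.not_nonempty_iff_eq_empty] at h
    exact (h ▸ hmax (0, 0) (fun a ha => by simp [h] at ha) : ((0, 0) : E × StrongDual ℝ E) ∈ (∅ : Set _))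
  obtain ⟨p₀, hp₀⟩ := hne
  have hle : ∀ (b : E × StrongDual ℝ E), ∀ p ∈ G,
      ((b.2 p.1 + p.2 b.1 - p.2 p.1 : ℝ) : EReal) ≤ fitz G b := by
    intro b p hp
    unfold fitz
    exact le_biSup (f := fun p => ((b.2 p.1 + p.2 b.1 - p.2 p.1 : ℝ) : EReal)) hp
  -- on G, fitz ≤ q
  have hGle : ∀ b ∈ G, fitz G b ≤ ((b.2 b.1 : ℝ) : EReal) := by
    intro b hb
    refine iSup₂_le fun p hp => ?_
    rw [EReal.coe_le_coe_iff]
    have := hmono b hb p hp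
    simp only [ContinuousLinearMap.sub_apply, map_sub] at this
    linarith
  -- fitz ≥ q everywhere
  have hq : ∀ b : E × StrongDual ℝ E, ((b.2 b.1 : ℝ) : EReal) ≤ fitz G b := by
    intro b
    by_cases hb : b ∈ G
    · have := hle b b hb
      have h2 : (b.2 b.1 + b.2 b.1 - b.2 b.1 : ℝ) = b.2 b.1 := by ring
      rwa [h2] at this
    · have : ¬ ∀ a ∈ G, 0 ≤ (a.2 - b.2) (a.1 - b.1) := fun h => hb (hmax b h)
      push_neg at this
      obtain ⟨a, ha, hlt⟩ := this
      refine le_trans ?_ (hle b a ha)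
      rw [EReal.coe_le_coe_iff]
      simp only [ContinuousLinearMap.sub_apply, map_sub] at hlt
      linarith
  refine ⟨?_, ⟨p₀, ?_⟩, ?_, ?_, hq, ?_⟩
  · intro b
    intro hbot
    have := hle b p₀ hp₀
    rw [hbot] at this
    exact (EReal.bot_lt_coe _).not_ge this
  · intro htop
    have := hGle p₀ hp₀
    rw [htop] at this
    exact (EReal.coe_lt_top _).not_ge this
  · -- convexity
    intro b c a a' haa haa' hsum
    refine iSup₂_le fun p hp => ?_
    have key : ((a • b + a' • c).2 p.1 + p.2 (a • b + a' • c).1 - p.2 p.1 : ℝ)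
        = a * (b.2 p.1 + p.2 b.1 - p.2 p.1) + a' * (c.2 p.1 + p.2 c.1 - p.2 p.1) := by
      simp only [Prod.fst_add, Prod.snd_add, Prod.smul_fst, Prod.smul_snd,
        ContinuousLinearMap.add_apply, ContinuousLinearMap.coe_smul',
        Pi.smul_apply, map_add, map_smul, smul_eq_mul]
      linear_combination p.2 p.1 * hsum
    rw [key]
    push_cast
    refine add_le_add ?_ ?_
    · exact mul_le_mul_of_nonneg_left (hle b p hp) (by exact_mod_cast haa)
    · exact mul_le_mul_of_nonneg_left (hle c p hp) (by exact_mod_cast haa')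
  · -- LSC
    refine lowerSemicontinuous_iSup fun p => lowerSemicontinuous_iSup fun hp => ?_
    apply Continuous.lowerSemicontinuous
    refine continuous_coe_real_ereal.comp ?_
    fun_prop
  · ext b
    simp only [Set.mem_setOf_eq]
    constructor
    · intro heq
      by_contra hb
      have : ¬ ∀ a ∈ G, 0 ≤ (a.2 - b.2) (a.1 - b.1) := fun h => hb (hmax b h)
      push_neg at this
      obtain ⟨a, ha, hlt⟩ := this
      have h1 : ((b.2 b.1 : ℝ) : EReal) < ((b.2 a.1 + a.2 b.1 - a.2 a.1 : ℝ) : EReal) := by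
        rw [EReal.coe_lt_coe_iff]
        simp only [ContinuousLinearMap.sub_apply, map_sub] at hlt
        linarith
      exact absurd (hle b a ha) (not_le.mpr ((heq ▸ h1 : fitz G b < _)))
    · intro hb
      exact le_antisymm (hGle b hb) (hq b)
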